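/- For every fixed ℓ > 0 and β > 0, the speed function satisfies lim_{p→1⁻} c*(β, p, ℓ) = 0; that is, the wave speed on the constant-degree tree tends to zero as the degree d = 1/(1−p) tends to infinity with the reaction rate held fixed. -/
import Mathlib


open Real Set Filter

/-- `γ(λ) = e^{ℓ√(2λ)}`. -/
noncomputable def treeGamma (ℓ lam : ℝ) : ℝ := Real.exp (ℓ * Real.sqrt (2 * lam))

/-- The constant-`(d,ℓ)` tree speed function
`c*(β,p,ℓ) = inf_{λ ≥ 0} (λ+β)/(√(2λ) + (1/ℓ)·ln(4p/(1+γ(λ)² − √((γ(λ)²−1)² + 4(2p−1)²γ(λ)²))))`. -/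
noncomputable def cstarConst (β p ℓ : ℝ) : ℝ :=
  sInf ((fun lam : ℝ => (lam + β) /
    (Real.sqrt (2 * lam) + (1 / ℓ) * Real.log (4 * p /
      (1 + treeGamma ℓ lam ^ 2 -
        Real.sqrt ((treeGamma ℓ lam ^ 2 - 1) ^ 2 +
          4 * (2 * p - 1) ^ 2 * treeGamma ℓ lam ^ 2))))) '' Set.Ici 0)

/-- Each value of the function being inf'd is nonnegative. -/
lemma cstar_aux_nonneg (ℓ β p lam : ℝ) (hℓ : 0 < ℓ) (hβ : 0 < β)
    (hp : p ∈ Set.Ioo (1/2 : ℝ) 1) (hlam : 0 ≤ lam) :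
    0 ≤ (lam + β) /
    (Real.sqrt (2 * lam) + (1 / ℓ) * Real.log (4 * p /
      (1 + treeGamma ℓ lam ^ 2 -
        Real.sqrt ((treeGamma ℓ lam ^ 2 - 1) ^ 2 +
          4 * (2 * p - 1) ^ 2 * treeGamma ℓ lam ^ 2)))) := by
  obtain ⟨hp1, hp2⟩ := hp
  set g := treeGamma ℓ lam ^ 2 with hg
  have hg1 : (1 : ℝ) ≤ g := by
    rw [hg, treeGamma]
    have : (0:ℝ) ≤ ℓ * Real.sqrt (2 * lam) :=
      mul_nonneg hℓ.le (Real.sqrt_nonneg _)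
    nlinarith [Real.one_le_exp this]
  set K := (g - 1) ^ 2 + 4 * (2 * p - 1) ^ 2 * g with hK
  have hKnn : 0 ≤ K := by positivity
  have h2p1 : 0 < 2 * p - 1 := by linarith
  have h2p1' : 2 * p - 1 < 1 := by linarith
  -- √K < g + 1
  have hsqK_lt : Real.sqrt K < g + 1 := by
    have hdiff : (g + 1) ^ 2 - K = 4 * g * (1 - (2*p-1)^2) := by rw [hK]; ring
    have hq : (0:ℝ) < 1 - (2*p-1)^2 := by nlinarith
    have hgpos : (0:ℝ) < g := by linarith
    have hpos : 0 < 4 * g * (1 - (2*p-1)^2) := by positivity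
    have : K < (g + 1) ^ 2 := by linarith
    calc Real.sqrt K < Real.sqrt ((g + 1) ^ 2) := by
          exact Real.sqrt_lt_sqrt hKnn this
      _ = g + 1 := by rw [Real.sqrt_sq (by linarith)]
  have hden_pos : 0 < 1 + g - Real.sqrt K := by linarith
  -- √K ≥ 1 + g - 4p
  have hsqK_ge : 1 + g - 4 * p ≤ Real.sqrt K := by
    rcases le_or_gt (1 + g - 4 * p) 0 with h | h
    · exact h.trans (Real.sqrt_nonneg _)
    · rw [show (1 + g - 4 * p) = Real.sqrt ((1 + g - 4*p)^2) by
        rw [Real.sqrt_sq h.le]]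
      apply Real.sqrt_le_sqrt
      nlinarith
  have harg : (1 : ℝ) ≤ 4 * p / (1 + g - Real.sqrt K) := by
    rw [le_div_iff₀ hden_pos]; linarith
  have hlog : 0 ≤ Real.log (4 * p / (1 + g - Real.sqrt K)) :=
    Real.log_nonneg harg
  apply div_nonneg (by linarith)
  have := Real.sqrt_nonneg (2 * lam)
  have : 0 ≤ (1 / ℓ) * Real.log (4 * p / (1 + g - Real.sqrt K)) := by
    positivity
  linarith [Real.sqrt_nonneg (2 * lam)]

/-- The value at `λ = 0` equals `βℓ / log (p/(1-p))`. -/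
lemma cstar_aux_at_zero (ℓ β p : ℝ) (hℓ : 0 < ℓ) (hp : p ∈ Set.Ioo (1/2 : ℝ) 1) :
    ((0 : ℝ) + β) /
    (Real.sqrt (2 * 0) + (1 / ℓ) * Real.log (4 * p /
      (1 + treeGamma ℓ 0 ^ 2 -
        Real.sqrt ((treeGamma ℓ 0 ^ 2 - 1) ^ 2 +
          4 * (2 * p - 1) ^ 2 * treeGamma ℓ 0 ^ 2)))) =
    β * ℓ / Real.log (p / (1 - p)) := by
  obtain ⟨hp1, hp2⟩ := hp
  have hγ : treeGamma ℓ 0 = 1 := by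
    simp [treeGamma, Real.sqrt_eq_zero']
  rw [hγ]
  have h2p1 : 0 < 2 * p - 1 := by linarith
  have hs : Real.sqrt ((1^2 - 1)^2 + 4 * (2*p-1)^2 * 1^2) = 2 * (2*p-1) := by
    rw [show ((1:ℝ)^2 - 1)^2 + 4 * (2*p-1)^2 * 1^2 = (2*(2*p-1))^2 by ring,
      Real.sqrt_sq (by linarith)]
  rw [hs]
  have h1p : 0 < 1 - p := by linarith
  have harg : 4 * p / (1 + 1^2 - 2*(2*p-1)) = p / (1 - p) := by
    rw [show (1:ℝ) + 1^2 - 2*(2*p-1) = 4 * (1 - p) by ring]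
    rw [div_eq_div_iff (by positivity : (4:ℝ)*(1-p) ≠ 0) (ne_of_gt h1p)]
    ring
  rw [harg]
  rw [show (2:ℝ) * 0 = 0 by ring, Real.sqrt_zero, zero_add, zero_add]
  rw [one_div_mul_eq_div, div_div_eq_mul_div]

theorem stmt15 (ℓ β : ℝ) (hℓ : 0 < ℓ) (hβ : 0 < β) :
    Tendsto (fun p : ℝ => cstarConst β p ℓ)
      (nhdsWithin 1 (Set.Ioo (1 / 2 : ℝ) 1)) (nhds 0) := by
  have hmem : ∀ᶠ p in nhdsWithin 1 (Set.Ioo (1/2 : ℝ) 1), p ∈ Set.Ioo (1/2 : ℝ) 1 :=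
    eventually_mem_nhdsWithin
  -- lower bound
  have hlow : ∀ᶠ p in nhdsWithin 1 (Set.Ioo (1/2 : ℝ) 1), 0 ≤ cstarConst β p ℓ := by
    filter_upwards [hmem] with p hp
    apply Real.sInf_nonneg
    rintro x ⟨lam, hlam, rfl⟩
    exact cstar_aux_nonneg ℓ β p lam hℓ hβ hp hlam
  -- upper bound
  have hup : ∀ᶠ p in nhdsWithin 1 (Set.Ioo (1/2 : ℝ) 1),
      cstarConst β p ℓ ≤ β * ℓ / Real.log (p / (1 - p)) := by
    filter_upwards [hmem] with p hp
    have hbdd : BddBelow ((fun lam : ℝ => (lam + β) /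
        (Real.sqrt (2 * lam) + (1 / ℓ) * Real.log (4 * p /
          (1 + treeGamma ℓ lam ^ 2 -
            Real.sqrt ((treeGamma ℓ lam ^ 2 - 1) ^ 2 +
              4 * (2 * p - 1) ^ 2 * treeGamma ℓ lam ^ 2))))) '' Set.Ici 0) := by
      refine ⟨0, ?_⟩
      rintro x ⟨lam, hlam, rfl⟩
      exact cstar_aux_nonneg ℓ β p lam hℓ hβ hp hlam
    have h0 := csInf_le hbdd (Set.mem_image_of_mem _ (Set.self_mem_Ici))
    calc cstarConst β p ℓ ≤ _ := h0
      _ = β * ℓ / Real.log (p / (1 - p)) := cstar_aux_at_zero ℓ β p hℓ hp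
  -- the upper bound tends to 0
  have htop : Tendsto (fun p : ℝ => Real.log (p / (1 - p)))
      (nhdsWithin 1 (Set.Ioo (1/2 : ℝ) 1)) atTop := by
    have h1 : Tendsto (fun p : ℝ => Real.log p)
        (nhdsWithin 1 (Set.Ioo (1/2 : ℝ) 1)) (nhds 0) := by
      have := (Real.continuousAt_log (x := 1) one_ne_zero).continuousWithinAt
        (s := Set.Ioo (1/2 : ℝ) 1)
      simpa [Real.log_one] using this.tendsto
    have h2 : Tendsto (fun p : ℝ => Real.log (1 - p))
        (nhdsWithin 1 (Set.Ioo (1/2 : ℝ) 1)) atBot := by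
      apply Real.tendsto_log_nhdsGT_zero.comp
      refine tendsto_nhdsWithin_of_tendsto_nhds_of_eventually_within _ ?_ ?_
      · have : Tendsto (fun p : ℝ => 1 - p) (nhds 1) (nhds (1 - 1)) :=
          (tendsto_const_nhds.sub tendsto_id)
        simpa using this.mono_left nhdsWithin_le_nhds
      · filter_upwards [eventually_mem_nhdsWithin] with p hp
        exact sub_pos.mpr hp.2
    have h2' : Tendsto (fun p : ℝ => -Real.log (1 - p) + (-1 : ℝ))
        (nhdsWithin 1 (Set.Ioo (1/2 : ℝ) 1)) atTop :=
      tendsto_atTop_add_const_right _ _ (tendsto_neg_atBot_atTop.comp h2)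
    have : Tendsto (fun p : ℝ => Real.log p - Real.log (1 - p))
        (nhdsWithin 1 (Set.Ioo (1/2 : ℝ) 1)) atTop := by
      refine tendsto_atTop_mono' _ ?_ h2'
      filter_upwards [hmem] with p hp
      have hp0 : (0:ℝ) < p := by linarith [hp.1]
      have hexp : Real.exp (-1) ≤ p := by
        have h2e : (2:ℝ) ≤ Real.exp 1 := by
          have := Real.add_one_le_exp (1:ℝ); linarith
        have : Real.exp (-1) ≤ 2⁻¹ := by
          rw [Real.exp_neg]
          exact inv_anti₀ (by norm_num) h2e
        norm_num at this
        linarith [hp.1]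
      have hlogp : -1 ≤ Real.log p := by
        rw [← Real.log_exp (-1)]
        exact Real.log_le_log (Real.exp_pos _) hexp
      linarith
    refine this.congr' ?_
    filter_upwards [hmem] with p hp
    rw [Real.log_div (by linarith [hp.1]) (by linarith [hp.2] : (1:ℝ) - p ≠ 0)]
  have hg0 : Tendsto (fun p : ℝ => β * ℓ / Real.log (p / (1 - p)))
      (nhdsWithin 1 (Set.Ioo (1/2 : ℝ) 1)) (nhds 0) :=
    Tendsto.div_atTop tendsto_const_nhds htop
  exact squeeze_zero' hlow hup hg0
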